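/- If the mixture components g_i(x; θ_i) are Gaussian densities N(μ_i, Σ_i), then the belief-condensation natural parameter update of Theorem 1 is given in closed form by μ_i^{[l+1]} = E_{g_i}[w(x)·x] / E_{g_i}[w(x)] and Σ_i^{[l+1]} = E_{g_i}[w(x)·x xᵀ] / E_{g_i}[w(x)] − μ_i^{[l+1]} (μ_i^{[l+1]})ᵀ, where w(x) = f(x)/g(x; ξ^{[l]}) and expectations are under g_i(·; θ_i^{[l]}). -/

import Mathlib

open MeasureTheory Matrix

/-- Multivariate Gaussian density `N(μ, Σ)` on `ℝ^d`. -/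
noncomputable def gaussianPdf (d : ℕ) (μ : Fin d → ℝ) (S : Matrix (Fin d) (Fin d) ℝ)
    (x : Fin d → ℝ) : ℝ :=
  (2 * Real.pi) ^ (-(d : ℝ) / 2) * S.det ^ (-(1 : ℝ) / 2) *
    Real.exp (-(1 / 2) * ((x - μ) ⬝ᵥ S⁻¹.mulVec (x - μ)))

open Real Filter Topology Asymptotics


noncomputable def stdg (t : ℝ) : ℝ := Real.exp (-(1/2) * t ^ 2)

lemma stdg_integrable : Integrable stdg := integrable_exp_neg_mul_sq (by norm_num : (0:ℝ) < 1/2)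

lemma stdg_mul_integrable : Integrable (fun t => t * stdg t) :=
  integrable_mul_exp_neg_mul_sq (by norm_num : (0:ℝ) < 1/2)

lemma stdg_sq_integrable : Integrable (fun t => t ^ 2 * stdg t) := by
  have h := integrable_rpow_mul_exp_neg_mul_sq (by norm_num : (0:ℝ) < 1/2)
    (s := 2) (by norm_num)
  have : (fun t : ℝ => t ^ (2:ℝ) * Real.exp (-(1/2) * t ^ 2))
      = fun t => t ^ 2 * stdg t := by
    funext t
    rw [show ((2:ℝ)) = ((2:ℕ):ℝ) by norm_num, Real.rpow_natCast]
    rfl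
  rwa [this] at h

lemma stdg_integral : ∫ t, stdg t = Real.sqrt (2 * Real.pi) := by
  unfold stdg
  rw [integral_gaussian]
  congr 1
  rw [div_div_eq_mul_div]
  norm_num
  ring

lemma stdg_mul_integral : ∫ t, t * stdg t = 0 := by
  have h : ∫ t : ℝ, (-t) * stdg (-t) = ∫ t, t * stdg t := integral_neg_eq_self (fun t => t * stdg t) volume
  have h2 : (fun t : ℝ => (-t) * stdg (-t)) = fun t => -(t * stdg t) := by
    funext t; unfold stdg; rw [neg_sq]; ring
  rw [h2, integral_neg] at h
  linarith

lemma tendsto_mul_stdg_atTop : Tendsto (fun t => t * stdg t) atTop (𝓝 0) := by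
  have h := (rpow_mul_exp_neg_mul_sq_isLittleO_exp_neg (by norm_num : (0:ℝ) < 1/2) 1)
  have h2 : Tendsto (fun x : ℝ => Real.exp (-(1/2) * x)) atTop (𝓝 0) := by
    apply Real.tendsto_exp_atBot.comp
    exact Tendsto.const_mul_atTop_of_neg (by norm_num) tendsto_id
  have h3 := h.trans_tendsto h2
  have he : (fun x : ℝ => x ^ (1:ℝ) * Real.exp (-(1/2) * x ^ 2)) = fun t => t * stdg t := by
    funext t; rw [Real.rpow_one]; rfl
  rwa [he] at h3


lemma stdg_hasDerivAt (t : ℝ) : HasDerivAt stdg (-t * stdg t) t := by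
  have hq : HasDerivAt (fun t : ℝ => -(1/2) * t ^ 2) (-t) t := by
    have := (hasDerivAt_pow 2 t).const_mul (-(1/2) : ℝ)
    refine this.congr_deriv ?_
    simp
  have h2 := hq.exp
  unfold stdg
  convert h2 using 1
  ring

lemma F_hasDerivAt (t : ℝ) : HasDerivAt (fun t => -t * stdg t) ((t ^ 2 - 1) * stdg t) t := by
  have h := ((hasDerivAt_id t).neg).mul (stdg_hasDerivAt t)
  refine h.congr_deriv ?_
  simp [stdg]
  ring

lemma stdg_sq_sub_integrable : Integrable (fun t => (t ^ 2 - 1) * stdg t) := by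
  have : (fun t => (t ^ 2 - 1) * stdg t) = fun t => t ^ 2 * stdg t - stdg t := by
    funext t; ring
  rw [this]
  exact stdg_sq_integrable.sub stdg_integrable

lemma tendsto_F_atBot : Tendsto (fun t => -t * stdg t) atBot (𝓝 0) := by
  have h : Tendsto (fun t : ℝ => -(-t) * stdg (-t)) atTop (𝓝 0) := by
    have : (fun t : ℝ => -(-t) * stdg (-t)) = fun t => t * stdg t := by
      funext t; unfold stdg; rw [neg_sq]; ring_nf
    rw [this]; exact tendsto_mul_stdg_atTop
  have h2 := h.comp tendsto_neg_atBot_atTop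
  convert h2 using 2 with t
  simp

lemma stdg_sq_integral : ∫ t, t ^ 2 * stdg t = Real.sqrt (2 * Real.pi) := by
  have h0 := MeasureTheory.integral_of_hasDerivAt_of_tendsto
    (f := fun t => -t * stdg t) (f' := fun t => (t ^ 2 - 1) * stdg t)
    F_hasDerivAt stdg_sq_sub_integrable tendsto_F_atBot
    (by simpa using tendsto_mul_stdg_atTop.neg)
  rw [sub_zero] at h0
  have h1 : ∫ t, ((t ^ 2 - 1) * stdg t) = (∫ t, t ^ 2 * stdg t) - ∫ t, stdg t := by
    rw [← integral_sub stdg_sq_integrable stdg_integrable]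
    congr 1; funext t; ring
  rw [h1, stdg_integral] at h0
  linarith

section Multi
variable {d : ℕ}

noncomputable def q1 (a : Fin d) : Fin d → ℝ → ℝ :=
  fun i t => (if i = a then t else 1) * stdg t

noncomputable def q2 (a b : Fin d) : Fin d → ℝ → ℝ :=
  fun i t => (if i = a then t else 1) * (if i = b then t else 1) * stdg t

lemma q1_eq (a : Fin d) (y : Fin d → ℝ) :
    (∏ i, stdg (y i)) * y a = ∏ i, q1 a i (y i) := by
  unfold q1
  rw [Finset.prod_mul_distrib]
  have h1 : ∏ i, (if i = a then y i else 1) = y a := by simp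
  rw [h1]; ring

lemma q2_eq (a b : Fin d) (y : Fin d → ℝ) :
    (∏ i, stdg (y i)) * (y a * y b) = ∏ i, q2 a b i (y i) := by
  unfold q2
  rw [Finset.prod_mul_distrib, Finset.prod_mul_distrib]
  have h1 : ∏ i, (if i = a then y i else 1) = y a := by simp
  have h2 : ∏ i, (if i = b then y i else 1) = y b := by simp
  rw [h1, h2]; ring

lemma q1_integrable (a : Fin d) (i : Fin d) : Integrable (q1 a i) := by
  unfold q1
  rcases eq_or_ne i a with rfl | h
  · simp only [if_pos rfl]
    exact stdg_mul_integrable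
  · simp only [if_neg h, one_mul]
    exact stdg_integrable

lemma mul_self_stdg_integrable : Integrable (fun t : ℝ => t * t * stdg t) := by
  have : (fun t : ℝ => t * t * stdg t) = fun t => t ^ 2 * stdg t := by funext t; ring
  rw [this]; exact stdg_sq_integrable

lemma q2_integrable (a b : Fin d) (i : Fin d) : Integrable (q2 a b i) := by
  unfold q2
  rcases eq_or_ne i a with rfl | ha
  · rcases eq_or_ne i b with rfl | hb
    · simp only [if_pos rfl]
      exact mul_self_stdg_integrable
    · simp only [if_pos rfl, if_neg hb, mul_one]
      exact stdg_mul_integrable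
  · rcases eq_or_ne i b with rfl | hb
    · simp only [if_pos rfl, if_neg ha, one_mul]
      exact stdg_mul_integrable
    · simp only [if_neg ha, if_neg hb, one_mul]
      exact stdg_integrable

lemma q1_integral (a : Fin d) : ∫ y : Fin d → ℝ, (∏ i, stdg (y i)) * y a = 0 := by
  have h : (fun y : Fin d → ℝ => (∏ i, stdg (y i)) * y a)
      = fun y => ∏ i, q1 a i (y i) := by funext y; exact q1_eq a y
  rw [h, MeasureTheory.integral_fintype_prod_volume_eq_prod]
  apply Finset.prod_eq_zero (Finset.mem_univ a)
  have : (fun t : ℝ => q1 a a t) = fun t => t * stdg t := by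
    funext t; unfold q1; rw [if_pos rfl]
  rw [this, stdg_mul_integral]

lemma P_integral : ∫ y : Fin d → ℝ, ∏ i, stdg (y i) = Real.sqrt (2 * Real.pi) ^ d := by
  rw [MeasureTheory.integral_fintype_prod_volume_eq_pow stdg, stdg_integral, Fintype.card_fin]

lemma P_integrable : Integrable (fun y : Fin d → ℝ => ∏ i, stdg (y i)) :=
  Integrable.fintype_prod (fun _ => stdg_integrable)

lemma q1_prod_integrable (a : Fin d) :
    Integrable (fun y : Fin d → ℝ => (∏ i, stdg (y i)) * y a) := by
  have h : (fun y : Fin d → ℝ => (∏ i, stdg (y i)) * y a)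
      = fun y => ∏ i, q1 a i (y i) := by funext y; exact q1_eq a y
  rw [h]
  exact Integrable.fintype_prod_dep (q1_integrable a)

lemma q2_prod_integrable (a b : Fin d) :
    Integrable (fun y : Fin d → ℝ => (∏ i, stdg (y i)) * (y a * y b)) := by
  have h : (fun y : Fin d → ℝ => (∏ i, stdg (y i)) * (y a * y b))
      = fun y => ∏ i, q2 a b i (y i) := by funext y; exact q2_eq a b y
  rw [h]
  exact Integrable.fintype_prod_dep (q2_integrable a b)

lemma q2_integral (a b : Fin d) :
    ∫ y : Fin d → ℝ, (∏ i, stdg (y i)) * (y a * y b)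
      = if a = b then Real.sqrt (2 * Real.pi) ^ d else 0 := by
  have h : (fun y : Fin d → ℝ => (∏ i, stdg (y i)) * (y a * y b))
      = fun y => ∏ i, q2 a b i (y i) := by funext y; exact q2_eq a b y
  rw [h, MeasureTheory.integral_fintype_prod_volume_eq_prod]
  by_cases hab : a = b
  · subst hab
    rw [if_pos rfl]
    have key : ∀ i : Fin d, (∫ t, q2 a a i t) = Real.sqrt (2 * Real.pi) := by
      intro i
      rcases eq_or_ne i a with rfl | h
      · have he : (fun t : ℝ => q2 i i i t) = fun t => t ^ 2 * stdg t := by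
          funext t; unfold q2; rw [if_pos rfl]; ring
        rw [he, stdg_sq_integral]
      · have he : (fun t : ℝ => q2 a a i t) = stdg := by
          funext t; unfold q2; rw [if_neg h]; ring
        rw [he, stdg_integral]
    rw [Finset.prod_congr rfl (fun i _ => key i), Finset.prod_const, Finset.card_univ,
      Fintype.card_fin]
  · rw [if_neg hab]
    apply Finset.prod_eq_zero (Finset.mem_univ a)
    have he : (fun t : ℝ => q2 a b a t) = fun t => t * stdg t := by
      funext t; unfold q2; rw [if_pos rfl, if_neg hab]; ring
    rw [he, stdg_mul_integral]

end Multi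

section COV
open Matrix
variable {d : ℕ}

lemma cov (M : Matrix (Fin d) (Fin d) ℝ) (hM : M.det ≠ 0) (g : (Fin d → ℝ) → ℝ)
    (hg : Continuous g) : ∫ x, g x = |M.det| * ∫ y, g (M.mulVec y) := by
  have hmap := Real.map_matrix_volume_pi_eq_smul_volume_pi hM
  have hcont : Continuous (Matrix.toLin' M) := LinearMap.continuous_on_pi _
  have h1 : ∫ y, g (M.mulVec y) = ∫ x, g x ∂(Measure.map (Matrix.toLin' M) volume) := by
    rw [integral_map hcont.measurable.aemeasurable hg.aestronglyMeasurable]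
    simp only [Matrix.toLin'_apply]
  rw [hmap, integral_smul_measure, ENNReal.toReal_ofReal (abs_nonneg _)] at h1
  rw [h1, abs_inv, smul_eq_mul]
  field_simp

lemma quad_form_sqrt (S A : Matrix (Fin d) (Fin d) ℝ) (hAA : A * A = S)
    (hAt : Aᵀ = A) (hdetA : A.det ≠ 0) (y : Fin d → ℝ) :
    (A.mulVec y) ⬝ᵥ S⁻¹.mulVec (A.mulVec y) = y ⬝ᵥ y := by
  have hinv : S⁻¹ = A⁻¹ * A⁻¹ := by rw [← hAA, Matrix.mul_inv_rev]
  have hA1 : A⁻¹ * A = 1 := Matrix.nonsing_inv_mul A (by simp [hdetA])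
  rw [Matrix.mulVec_mulVec, hinv, Matrix.mul_assoc, hA1, Matrix.mul_one,
    Matrix.dotProduct_mulVec]
  have hv : Matrix.vecMul (A.mulVec y) A⁻¹ = ((A⁻¹)ᵀ * A).mulVec y := by
    rw [← Matrix.mulVec_transpose, Matrix.mulVec_mulVec]
  rw [hv, Matrix.transpose_nonsing_inv, hAt, hA1]
  simp

end COV

section Gauss
open Matrix
open scoped MatrixOrder
variable {d : ℕ} (μ : Fin d → ℝ) (S : Matrix (Fin d) (Fin d) ℝ)

lemma gaussianPdf_continuous : Continuous (fun x => gaussianPdf d μ S x) := by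
  unfold gaussianPdf
  apply Continuous.mul continuous_const
  apply Real.continuous_exp.comp
  apply Continuous.mul continuous_const
  simp only [dotProduct, Matrix.mulVec]
  apply continuous_finset_sum
  intro i _
  apply Continuous.mul
  · exact (continuous_apply i).sub continuous_const
  · apply continuous_finset_sum
    intro k _
    exact continuous_const.mul ((continuous_apply k).sub continuous_const)

lemma sqrt_props (hS : S.PosDef) : ∃ A : Matrix (Fin d) (Fin d) ℝ,
    A * A = S ∧ Aᵀ = A ∧ A.det ≠ 0 ∧ |A.det| = Real.sqrt S.det := by
  set A := CFC.sqrt S with hA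
  have hAA : A * A = S := CFC.sqrt_mul_sqrt_self S hS.posSemidef.nonneg
  have hd : S.det = A.det * A.det := by rw [← Matrix.det_mul, hAA]
  have hdne : A.det ≠ 0 := by
    intro h
    have := hS.det_pos
    rw [hd, h, mul_zero] at this
    exact lt_irrefl 0 this
  refine ⟨A, hAA, ?_, hdne, ?_⟩
  · have h := (CFC.sqrt_nonneg S).isSelfAdjoint
    rwa [IsSelfAdjoint, Matrix.star_eq_conjTranspose, Matrix.conjTranspose_eq_transpose_of_trivial] at h
  · rw [hd, ← Real.sqrt_mul_self (abs_nonneg A.det), abs_mul_abs_self]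

lemma rpow_det_fact {t : ℝ} (ht : 0 < t) : t ^ (-(1:ℝ)/2) * Real.sqrt t = 1 := by
  rw [Real.sqrt_eq_rpow, ← Real.rpow_add ht]
  norm_num

lemma two_pi_fact (d : ℕ) :
    (2 * Real.pi) ^ (-(d:ℝ)/2) * Real.sqrt (2 * Real.pi) ^ d = 1 := by
  have h2π : (0:ℝ) < 2 * Real.pi := by positivity
  rw [Real.sqrt_eq_rpow, ← Real.rpow_natCast ((2*Real.pi) ^ ((1:ℝ)/2)) d,
    ← Real.rpow_mul h2π.le, ← Real.rpow_add h2π,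
    show -(d:ℝ) / 2 + 1 / 2 * (d:ℝ) = 0 by ring]
  exact Real.rpow_zero _

lemma pdf_comp (A : Matrix (Fin d) (Fin d) ℝ) (hAA : A * A = S) (hAt : Aᵀ = A)
    (hdetA : A.det ≠ 0) (y : Fin d → ℝ) :
    gaussianPdf d μ S (μ + A.mulVec y)
      = (2 * Real.pi) ^ (-(d:ℝ)/2) * S.det ^ (-(1:ℝ)/2) * ∏ i, stdg (y i) := by
  unfold gaussianPdf
  have h1 : μ + A.mulVec y - μ = A.mulVec y := by abel
  rw [h1, quad_form_sqrt S A hAA hAt hdetA]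
  congr 1
  have h2 : y ⬝ᵥ y = ∑ i, y i * y i := rfl
  rw [h2, Finset.mul_sum, Real.exp_sum]
  apply Finset.prod_congr rfl
  intro i _
  unfold stdg
  congr 1
  ring

lemma gauss_reduce (hS : S.PosDef) (A : Matrix (Fin d) (Fin d) ℝ) (hAA : A * A = S)
    (hAt : Aᵀ = A) (hdetA : A.det ≠ 0) (habs : |A.det| = Real.sqrt S.det)
    (g : (Fin d → ℝ) → ℝ) (hg : Continuous g) :
    ∫ x, gaussianPdf d μ S x * g x
      = (2 * Real.pi) ^ (-(d:ℝ)/2)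
          * ∫ y, (∏ i, stdg (y i)) * g (μ + A.mulVec y) := by
  have hstep1 : ∫ x, gaussianPdf d μ S x * g x
      = ∫ z, gaussianPdf d μ S (μ + z) * g (μ + z) :=
    (integral_add_left_eq_self (fun x => gaussianPdf d μ S x * g x) μ).symm
  have hcont : Continuous (fun z => gaussianPdf d μ S (μ + z) * g (μ + z)) := by
    have hc : Continuous (fun z : Fin d → ℝ => μ + z) := continuous_const.add continuous_id
    exact ((gaussianPdf_continuous μ S).comp hc).mul (hg.comp hc)
  have hstep2 := cov A hdetA _ hcont
  rw [hstep1, hstep2]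
  have hre : (fun y => gaussianPdf d μ S (μ + A.mulVec y) * g (μ + A.mulVec y))
      = fun y => (S.det ^ (-(1:ℝ)/2) * (2 * Real.pi) ^ (-(d:ℝ)/2))
          * ((∏ i, stdg (y i)) * g (μ + A.mulVec y)) := by
    funext y
    rw [pdf_comp μ S A hAA hAt hdetA y]
    ring
  rw [hre, MeasureTheory.integral_const_mul, habs, ← mul_assoc]
  congr 1
  rw [← mul_assoc, mul_comm (Real.sqrt S.det) (S.det ^ (-(1:ℝ)/2)),
    rpow_det_fact hS.det_pos, one_mul]

lemma gauss_moment0 (hS : S.PosDef) : ∫ x, gaussianPdf d μ S x = 1 := by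
  obtain ⟨A, hAA, hAt, hdetA, habs⟩ := sqrt_props S hS
  have h : (fun x => gaussianPdf d μ S x) = fun x => gaussianPdf d μ S x * (fun _ => (1:ℝ)) x := by
    funext x; simp
  rw [h, gauss_reduce μ S hS A hAA hAt hdetA habs _ continuous_const]
  simp only [mul_one]
  rw [P_integral, two_pi_fact]

lemma gauss_moment1 (hS : S.PosDef) (j : Fin d) :
    ∫ x, gaussianPdf d μ S x * x j = μ j := by
  obtain ⟨A, hAA, hAt, hdetA, habs⟩ := sqrt_props S hS
  rw [gauss_reduce μ S hS A hAA hAt hdetA habs _ (continuous_apply j)]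
  have expand : (fun y : Fin d → ℝ => (∏ i, stdg (y i)) * (μ + A.mulVec y) j)
      = fun y => μ j * (∏ i, stdg (y i)) + ∑ k, A j k * ((∏ i, stdg (y i)) * y k) := by
    funext y
    have h1 : (μ + A.mulVec y) j = μ j + ∑ k, A j k * y k := by
      simp [Matrix.mulVec, dotProduct]
    rw [h1, mul_add, Finset.mul_sum, mul_comm _ (μ j)]
    congr 1
    exact Finset.sum_congr rfl (fun k _ => by ring)
  rw [expand, integral_add (P_integrable.const_mul (μ j))
    (integrable_finset_sum _ (fun k _ => (q1_prod_integrable k).const_mul (A j k))),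
    integral_finset_sum _ (fun k _ => (q1_prod_integrable k).const_mul (A j k))]
  simp only [MeasureTheory.integral_const_mul, q1_integral, mul_zero, Finset.sum_const_zero,
    add_zero, P_integral]
  rw [← mul_assoc, mul_comm _ (μ j), mul_assoc, two_pi_fact, mul_one]

lemma gauss_moment2 (hS : S.PosDef) (j k : Fin d) :
    ∫ x, gaussianPdf d μ S x * (x j * x k) = S j k + μ j * μ k := by
  obtain ⟨A, hAA, hAt, hdetA, habs⟩ := sqrt_props S hS
  have hcont : Continuous (fun x : Fin d → ℝ => x j * x k) :=
    (continuous_apply j).mul (continuous_apply k)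
  rw [gauss_reduce μ S hS A hAA hAt hdetA habs _ hcont]
  have expand : (fun y : Fin d → ℝ =>
        (∏ i, stdg (y i)) * ((μ + A.mulVec y) j * (μ + A.mulVec y) k))
      = fun y => (μ j * μ k) * (∏ i, stdg (y i))
        + ((∑ a, (μ j * A k a) * ((∏ i, stdg (y i)) * y a)
            + ∑ a, (μ k * A j a) * ((∏ i, stdg (y i)) * y a))
        + ∑ a, ∑ b, (A j a * A k b) * ((∏ i, stdg (y i)) * (y a * y b))) := by
    funext y
    have h1 : (μ + A.mulVec y) j = μ j + ∑ a, A j a * y a := by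
      simp [Matrix.mulVec, dotProduct]
    have h2 : (μ + A.mulVec y) k = μ k + ∑ a, A k a * y a := by
      simp [Matrix.mulVec, dotProduct]
    have e1 : ∑ a, (μ k * A j a) * ((∏ i, stdg (y i)) * y a)
        = (∏ i, stdg (y i)) * ((∑ a, A j a * y a) * μ k) := by
      rw [Finset.sum_mul, Finset.mul_sum]
      exact Finset.sum_congr rfl (fun a _ => by ring)
    have e2 : ∑ a, (μ j * A k a) * ((∏ i, stdg (y i)) * y a)
        = (∏ i, stdg (y i)) * (μ j * ∑ a, A k a * y a) := by
      rw [Finset.mul_sum, Finset.mul_sum]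
      exact Finset.sum_congr rfl (fun a _ => by ring)
    have e3 : (∏ i, stdg (y i)) * ((∑ a, A j a * y a) * ∑ b, A k b * y b)
        = ∑ a, ∑ b, (A j a * A k b) * ((∏ i, stdg (y i)) * (y a * y b)) := by
      rw [Finset.sum_mul_sum, Finset.mul_sum]
      refine Finset.sum_congr rfl (fun a _ => ?_)
      rw [Finset.mul_sum]
      exact Finset.sum_congr rfl (fun b _ => by ring)
    rw [h1, h2, e1, e2, ← e3]
    ring
  have int1 : Integrable (fun y : Fin d → ℝ => (μ j * μ k) * ∏ i, stdg (y i)) :=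
    P_integrable.const_mul _
  have int2 : Integrable (fun y : Fin d → ℝ =>
      ∑ a, (μ j * A k a) * ((∏ i, stdg (y i)) * y a)) :=
    integrable_finset_sum _ (fun a _ => (q1_prod_integrable a).const_mul _)
  have int3 : Integrable (fun y : Fin d → ℝ =>
      ∑ a, (μ k * A j a) * ((∏ i, stdg (y i)) * y a)) :=
    integrable_finset_sum _ (fun a _ => (q1_prod_integrable a).const_mul _)
  have int4 : Integrable (fun y : Fin d → ℝ =>
      ∑ a, ∑ b, (A j a * A k b) * ((∏ i, stdg (y i)) * (y a * y b))) :=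
    integrable_finset_sum _ (fun a _ =>
      integrable_finset_sum _ (fun b _ => (q2_prod_integrable a b).const_mul _))
  have int23 : Integrable (fun y : Fin d → ℝ =>
      (∑ a, (μ j * A k a) * ((∏ i, stdg (y i)) * y a))
      + ∑ a, (μ k * A j a) * ((∏ i, stdg (y i)) * y a)) := int2.add int3
  have int234 : Integrable (fun y : Fin d → ℝ =>
      ((∑ a, (μ j * A k a) * ((∏ i, stdg (y i)) * y a))
        + ∑ a, (μ k * A j a) * ((∏ i, stdg (y i)) * y a))
      + ∑ a, ∑ b, (A j a * A k b) * ((∏ i, stdg (y i)) * (y a * y b))) := int23.add int4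
  rw [expand, integral_add int1 int234,
    integral_add int23 int4, integral_add int2 int3,
    integral_finset_sum _ (fun a _ => (q1_prod_integrable a).const_mul _),
    integral_finset_sum _ (fun a _ => (q1_prod_integrable a).const_mul _),
    integral_finset_sum _ (fun a _ =>
      integrable_finset_sum _ (fun b _ => (q2_prod_integrable a b).const_mul _))]
  have hz : ∀ c : ℝ, ∀ a : Fin d,
      ∫ y : Fin d → ℝ, c * ((∏ i, stdg (y i)) * y a) = 0 := by
    intro c a
    rw [MeasureTheory.integral_const_mul, q1_integral, mul_zero]
  have h4 : ∀ a : Fin d,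
      (∫ y : Fin d → ℝ, ∑ b, (A j a * A k b) * ((∏ i, stdg (y i)) * (y a * y b)))
      = (A j a * A k a) * Real.sqrt (2 * Real.pi) ^ d := by
    intro a
    rw [integral_finset_sum _ (fun b _ => (q2_prod_integrable a b).const_mul _)]
    have hb : ∀ b : Fin d,
        (∫ y : Fin d → ℝ, (A j a * A k b) * ((∏ i, stdg (y i)) * (y a * y b)))
        = if a = b then (A j a * A k b) * Real.sqrt (2 * Real.pi) ^ d else 0 := by
      intro b
      rw [MeasureTheory.integral_const_mul, q2_integral]
      by_cases hab : a = b <;> simp [hab]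
    simp only [hb, Finset.sum_ite_eq, Finset.mem_univ, if_true]
  simp only [hz, h4, Finset.sum_const_zero, add_zero, zero_add,
    MeasureTheory.integral_const_mul, P_integral]
  have hSjk : ∑ a, A j a * A k a = S j k := by
    rw [← hAA, Matrix.mul_apply]
    refine Finset.sum_congr rfl (fun a _ => ?_)
    have h := congrFun (congrFun hAt a) k
    simp only [Matrix.transpose_apply] at h
    rw [← h]
  rw [← Finset.sum_mul, hSjk]
  have h2f := two_pi_fact d
  set K := (2 * Real.pi) ^ (-(d:ℝ)/2) with hK
  set Q := Real.sqrt (2 * Real.pi) ^ d with hQ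
  have hfin : K * (μ j * μ k * Q + S j k * Q) = (S j k + μ j * μ k) * (K * Q) := by ring
  rw [hfin, h2f, mul_one]
end Gauss

/-- Corollary: for Gaussian mixture components, the BCF natural-parameter update
(moment matching of the sufficient statistics `t(x) = (x, x xᵀ)`) is given in closed form by
`μ' = E_{g_i}[w x]/E_{g_i}[w]` and `Σ' = E_{g_i}[w x xᵀ]/E_{g_i}[w] − μ' μ'ᵀ`,
where `w = f/g(·; ξ^{[l]})` and expectations are under `g_i(·; θ^{[l]}) = N(μ_l, Σ_l)`. -/
theorem bcf_gaussian_update {d : ℕ}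
    (f gmix : (Fin d → ℝ) → ℝ)
    (μl μ' : Fin d → ℝ) (Sl S' : Matrix (Fin d) (Fin d) ℝ)
    (hSl : Sl.PosDef) (hS' : S'.PosDef)
    (hSl_symm : Sl.IsSymm) (hS'_symm : S'.IsSymm)
    (hf_cont : Continuous f) (hf_nonneg : ∀ x, 0 ≤ f x) (hf_one : (∫ x, f x) = 1)
    (w : (Fin d → ℝ) → ℝ) (hw : ∀ x, w x = f x / gmix x)
    (D : ℝ) (hD : D = ∫ x, gaussianPdf d μl Sl x * w x) (hDpos : 0 < D)
    -- integrability of the weighted moments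
    (hint1 : ∀ j, Integrable fun x => gaussianPdf d μl Sl x * w x * x j)
    (hint2 : ∀ j k, Integrable fun x => gaussianPdf d μl Sl x * w x * (x j * x k))
    -- moment matching: the first two moments of N(μ', Σ') equal the
    -- f/g-weighted moments under g_i(·; θ^{[l]})
    (hmatch1 : ∀ j, (∫ x, gaussianPdf d μ' S' x * x j)
      = (∫ x, gaussianPdf d μl Sl x * w x * x j) / D)
    (hmatch2 : ∀ j k, (∫ x, gaussianPdf d μ' S' x * (x j * x k))
      = (∫ x, gaussianPdf d μl Sl x * w x * (x j * x k)) / D) :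
    (∀ j, μ' j = (∫ x, gaussianPdf d μl Sl x * w x * x j) / D) ∧
    (∀ j k, S' j k =
      (∫ x, gaussianPdf d μl Sl x * w x * (x j * x k)) / D - μ' j * μ' k) := by
  refine ⟨fun j => ?_, fun j k => ?_⟩
  · rw [← hmatch1 j]
    exact (gauss_moment1 μ' S' hS' j).symm
  · have h2 := gauss_moment2 μ' S' hS' j k
    have h3 := hmatch2 j k
    linarith
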